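/- Let 𝒳 ⊂ ℝ^{n_x} be a compact set of positive Lebesgue measure, q₀ a continuous probability density on 𝒳, q a continuous Markov kernel density on 𝒳 × 𝒳, K ∈ ℕ a horizon, and T the induced trajectory density on 𝒮 = 𝒳^{K+1}. Define the backward value functions 𝒱_K(x) = 0 for all x ∈ 𝒳 and, for k = K−1, …, 0, 𝒱_k(x) = ∫_𝒳 q(x, x′) log(q(x, x′) λ(𝒳)) dx′ + ∫_𝒳 q(x, x′) 𝒱_{k+1}(x′) dx′. Then KL(T‖U) = ∫_𝒳 q₀(x) log(q₀(x) λ(𝒳)) dx + ∫_𝒳 q₀(x) 𝒱_0(x) dx. -/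

import Mathlib

open MeasureTheory Real Finset

noncomputable section

private lemma aux_log_split (x c : ℝ) (hc : c ≠ 0) :
    x * Real.log (x * c) = x * Real.log x + x * Real.log c := by
  rcases eq_or_ne x 0 with h | h
  · simp [h]
  · rw [Real.log_mul h hc, mul_add]

private lemma kl_split (a b c : ℝ) (m : ℕ) (hc : c ≠ 0) :
    (a * b) * Real.log ((a * b) * c ^ (m + 1))
      = (a * Real.log (a * c)) * b + a * (b * Real.log (b * c ^ m)) := by
  rcases eq_or_ne a 0 with ha | ha
  · simp [ha]
  rcases eq_or_ne b 0 with hb | hb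
  · simp [hb]
  have hcm : c ^ m ≠ 0 := pow_ne_zero _ hc
  rw [pow_succ, show a * b * (c ^ m * c) = (a * c) * (b * c ^ m) by ring,
    Real.log_mul (mul_ne_zero ha hc) (mul_ne_zero hb hcm)]
  ring

private lemma contOn_mul_log {γ : Type*} [TopologicalSpace γ] {f : γ → ℝ} {s : Set γ}
    (hf : ContinuousOn f s) (c : ℝ) (hc : c ≠ 0) :
    ContinuousOn (fun x => f x * Real.log (f x * c)) s := by
  have : (fun x => f x * Real.log (f x * c))
      = (fun y => y * Real.log y + y * Real.log c) ∘ f := by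
    funext x; exact aux_log_split (f x) c hc
  rw [this]
  exact (Real.continuous_mul_log.add (continuous_id.mul continuous_const)).comp_continuousOn hf

section
variable {nx : ℕ} {𝒳 : Set (Fin nx → ℝ)} {q : (Fin nx → ℝ) → (Fin nx → ℝ) → ℝ}

private lemma peel_prod (q : (Fin nx → ℝ) → (Fin nx → ℝ) → ℝ) {K : ℕ}
    (s : Fin (K + 2) → Fin nx → ℝ) :
    (∏ k : Fin (K + 1), q (s k.castSucc) (s k.succ))
      = q (s 0) (s ((0 : Fin (K + 1)).succ))
        * ∏ k : Fin K, q (s (k.castSucc.succ)) (s (k.succ.succ)) := by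
  rw [Fin.prod_univ_succ]
  simp [Fin.succ_castSucc, -Fin.castSucc_succ]

private lemma peel_apply {K : ℕ} (s : Fin (K + 2) → Fin nx → ℝ) :
    (MeasurableEquiv.piFinSuccAbove (fun _ : Fin (K + 2) => (Fin nx → ℝ)) 0) s
      = (s 0, fun j : Fin (K + 1) => s j.succ) := by
  simp [MeasurableEquiv.piFinSuccAbove, Fin.removeNth, Fin.succAbove_zero]
  rfl

private lemma peel_set (𝒳 : Set (Fin nx → ℝ)) {K : ℕ} :
    (Set.univ.pi fun _ : Fin (K + 2) => 𝒳)
      = (MeasurableEquiv.piFinSuccAbove (fun _ : Fin (K + 2) => (Fin nx → ℝ)) 0) ⁻¹'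
        (𝒳 ×ˢ Set.univ.pi fun _ : Fin (K + 1) => 𝒳) := by
  ext s
  simp only [Set.mem_pi, Set.mem_univ, forall_true_left, Set.mem_preimage, peel_apply,
    Set.mem_prod]
  constructor
  · exact fun h => ⟨h 0, fun j => h _⟩
  · rintro ⟨h0, hj⟩ i
    rcases Fin.eq_zero_or_eq_succ i with rfl | ⟨j, rfl⟩
    · exact h0
    · exact hj j

private lemma funUnique_setIntegral (g : (Fin nx → ℝ) → ℝ) (𝒳 : Set (Fin nx → ℝ)) :
    (∫ s in Set.univ.pi fun _ : Fin 1 => 𝒳, g (s 0)) = ∫ x in 𝒳, g x := by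
  have hpre : (Set.univ.pi fun _ : Fin 1 => 𝒳)
      = (MeasurableEquiv.funUnique (Fin 1) (Fin nx → ℝ)) ⁻¹' 𝒳 := by
    ext s
    simp only [Set.mem_pi, Set.mem_univ, forall_true_left, Set.mem_preimage,
      MeasurableEquiv.funUnique_apply]
    constructor
    · intro h; exact h default
    · intro h i
      have hi : i = default := Subsingleton.elim i default
      rw [hi]; exact h
  rw [hpre]
  have h := (volume_preserving_funUnique (Fin 1) (Fin nx → ℝ)).setIntegral_preimage_emb
    (MeasurableEquiv.funUnique (Fin 1) (Fin nx → ℝ)).measurableEmbedding g 𝒳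
  rw [show (fun s : Fin 1 → Fin nx → ℝ => g (s 0))
    = fun s : Fin 1 → Fin nx → ℝ => g ((MeasurableEquiv.funUnique (Fin 1) (Fin nx → ℝ)) s) by
      funext s; simp [MeasurableEquiv.funUnique_apply, Fin.eq_zero (default : Fin 1)]]
  exact h

private lemma traj_contOn {K : ℕ}
    (hqcont : ContinuousOn (fun z : (Fin nx → ℝ) × (Fin nx → ℝ) => q z.1 z.2) (𝒳 ×ˢ 𝒳)) :
    ContinuousOn
      (fun p : (Fin nx → ℝ) × (Fin (K + 1) → Fin nx → ℝ) =>
        q p.1 (p.2 0) * ∏ k : Fin K, q (p.2 k.castSucc) (p.2 k.succ))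
      (𝒳 ×ˢ Set.univ.pi fun _ : Fin (K + 1) => 𝒳) := by
  apply ContinuousOn.mul
  · apply ContinuousOn.comp (f := fun p : (Fin nx → ℝ) × (Fin (K + 1) → Fin nx → ℝ) =>
      ((p.1, p.2 0) : (Fin nx → ℝ) × (Fin nx → ℝ))) hqcont
    · exact (continuous_fst.prodMk ((continuous_apply (0 : Fin (K+1))).comp
        continuous_snd)).continuousOn
    · exact fun p hp => ⟨hp.1, hp.2 0 trivial⟩
  · apply continuousOn_finset_prod
    intro k _
    apply ContinuousOn.comp (f := fun p : (Fin nx → ℝ) × (Fin (K + 1) → Fin nx → ℝ) =>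
      ((p.2 k.castSucc, p.2 k.succ) : (Fin nx → ℝ) × (Fin nx → ℝ))) hqcont
    · exact (((continuous_apply k.castSucc).comp continuous_snd).prodMk
        ((continuous_apply k.succ).comp continuous_snd)).continuousOn
    · exact fun p hp => ⟨hp.2 _ trivial, hp.2 _ trivial⟩

private lemma traj_norm
    (hcomp : IsCompact 𝒳)
    (hqcont : ContinuousOn (fun z : (Fin nx → ℝ) × (Fin nx → ℝ) => q z.1 z.2) (𝒳 ×ˢ 𝒳))
    (hqint : ∀ x ∈ 𝒳, (∫ x' in 𝒳, q x x') = 1) :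
    ∀ (K : ℕ) (q0 : (Fin nx → ℝ) → ℝ), ContinuousOn q0 𝒳 → (∫ x in 𝒳, q0 x) = 1 →
      (∫ s in Set.univ.pi fun _ : Fin (K + 1) => 𝒳,
        q0 (s 0) * ∏ k : Fin K, q (s k.castSucc) (s k.succ)) = 1 := by
  have hXm : MeasurableSet 𝒳 := hcomp.isClosed.measurableSet
  intro K
  induction K with
  | zero =>
    intro q0 hq0cont hq0int
    simp only [Finset.univ_eq_empty, Finset.prod_empty, mul_one]
    rw [funUnique_setIntegral q0 𝒳, hq0int]
  | succ K IH =>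
    intro q0 hq0cont hq0int
    set S := Set.univ.pi fun _ : Fin (K + 1) => 𝒳 with hS
    have hSc : IsCompact S := isCompact_univ_pi fun _ => hcomp
    set e := MeasurableEquiv.piFinSuccAbove (fun _ : Fin (K + 2) => (Fin nx → ℝ)) 0 with he
    set G : (Fin nx → ℝ) × (Fin (K + 1) → Fin nx → ℝ) → ℝ :=
      fun p => q0 p.1 * (q p.1 (p.2 0) * ∏ k : Fin K, q (p.2 k.castSucc) (p.2 k.succ)) with hG
    have hGe : ∀ s : Fin (K + 2) → Fin nx → ℝ,
        q0 (s 0) * ∏ k : Fin (K + 1), q (s k.castSucc) (s k.succ) = G (e s) := by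
      intro s
      rw [hG, he, peel_apply, peel_prod q s]
    rw [show (∫ s in Set.univ.pi fun _ : Fin (K + 2) => 𝒳,
          q0 (s 0) * ∏ k : Fin (K + 1), q (s k.castSucc) (s k.succ))
        = ∫ s in Set.univ.pi fun _ : Fin (K + 2) => 𝒳, G (e s) from
          setIntegral_congr_fun (MeasurableSet.univ_pi fun _ => hXm) fun s _ => hGe s]
    rw [peel_set 𝒳, ← he]
    rw [(volume_preserving_piFinSuccAbove (fun _ : Fin (K + 2) => (Fin nx → ℝ))
      0).setIntegral_preimage_emb (MeasurableEquiv.measurableEmbedding _) G (𝒳 ×ˢ S)]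
    have hGcont : ContinuousOn G (𝒳 ×ˢ S) := by
      apply ContinuousOn.mul
      · exact hq0cont.comp continuous_fst.continuousOn fun p hp => hp.1
      · exact traj_contOn hqcont
    have hGint : IntegrableOn G (𝒳 ×ˢ S) := hGcont.integrableOn_compact (hcomp.prod hSc)
    rw [Measure.volume_eq_prod] at hGint ⊢
    rw [setIntegral_prod G hGint]
    have key : ∀ x ∈ 𝒳, (∫ t in S, G (x, t)) = q0 x := by
      intro x hx
      have h1 : (∫ t in S, G (x, t)) = q0 x * ∫ t in S,
          q x (t 0) * ∏ k : Fin K, q (t k.castSucc) (t k.succ) := by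
        rw [hG]; exact integral_const_mul (q0 x) _
      rw [h1, IH (fun x' => q x x')
        (hqcont.comp (continuous_const.prodMk continuous_id).continuousOn
          (fun x' hx' => ⟨hx, hx'⟩)) (hqint x hx), mul_one]
    rw [setIntegral_congr_fun hXm fun x hx => key x hx, hq0int]

private lemma traj_kl
    (hcomp : IsCompact 𝒳) (hpos : 0 < volume 𝒳)
    (hqcont : ContinuousOn (fun z : (Fin nx → ℝ) × (Fin nx → ℝ) => q z.1 z.2) (𝒳 ×ˢ 𝒳))
    (hqint : ∀ x ∈ 𝒳, (∫ x' in 𝒳, q x x') = 1) :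
    ∀ (K : ℕ) (q0 : (Fin nx → ℝ) → ℝ), ContinuousOn q0 𝒳 → (∫ x in 𝒳, q0 x) = 1 →
    ∀ (𝒱 : ℕ → (Fin nx → ℝ) → ℝ),
      (∀ x ∈ 𝒳, 𝒱 K x = 0) →
      (∀ k, k < K → ∀ x ∈ 𝒳, 𝒱 k x =
        (∫ x' in 𝒳, q x x' * Real.log (q x x' * (volume 𝒳).toReal))
        + ∫ x' in 𝒳, q x x' * 𝒱 (k + 1) x') →
      (∫ s in Set.univ.pi fun _ : Fin (K + 1) => 𝒳,
          (q0 (s 0) * ∏ k : Fin K, q (s k.castSucc) (s k.succ))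
            * Real.log ((q0 (s 0) * ∏ k : Fin K, q (s k.castSucc) (s k.succ))
              * (volume 𝒳).toReal ^ (K + 1)))
        = (∫ x in 𝒳, q0 x * Real.log (q0 x * (volume 𝒳).toReal))
          + ∫ x in 𝒳, q0 x * 𝒱 0 x := by
  have hXm : MeasurableSet 𝒳 := hcomp.isClosed.measurableSet
  set c : ℝ := (volume 𝒳).toReal with hc
  have hcpos : 0 < c := ENNReal.toReal_pos hpos.ne' hcomp.measure_lt_top.ne
  have hc0 : c ≠ 0 := hcpos.ne'
  intro K
  induction K with
  | zero =>
    intro q0 hq0cont hq0int 𝒱 h𝒱K h𝒱rec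
    have h2 : (∫ x in 𝒳, q0 x * 𝒱 0 x) = ∫ x in 𝒳, (0 : ℝ) :=
      setIntegral_congr_fun hXm fun x hx => by rw [h𝒱K x hx, mul_zero]
    rw [h2, integral_zero, add_zero]
    simp only [Finset.univ_eq_empty, Finset.prod_empty, mul_one, zero_add, pow_one]
    exact funUnique_setIntegral (fun x => q0 x * Real.log (q0 x * c)) 𝒳
  | succ K IH =>
    intro q0 hq0cont hq0int 𝒱 h𝒱K h𝒱rec
    set S := Set.univ.pi fun _ : Fin (K + 1) => 𝒳 with hS
    have hSc : IsCompact S := isCompact_univ_pi fun _ => hcomp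
    have hSm : MeasurableSet S := MeasurableSet.univ_pi fun _ => hXm
    set e := MeasurableEquiv.piFinSuccAbove (fun _ : Fin (K + 2) => (Fin nx → ℝ)) 0 with he
    set Tp : (Fin nx → ℝ) × (Fin (K + 1) → Fin nx → ℝ) → ℝ :=
      fun p => q p.1 (p.2 0) * ∏ k : Fin K, q (p.2 k.castSucc) (p.2 k.succ) with hTp
    set Gfull : (Fin nx → ℝ) × (Fin (K + 1) → Fin nx → ℝ) → ℝ :=
      fun p => (q0 p.1 * Tp p) * Real.log ((q0 p.1 * Tp p) * c ^ (K + 2)) with hGfull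
    set G1 : (Fin nx → ℝ) × (Fin (K + 1) → Fin nx → ℝ) → ℝ :=
      fun p => (q0 p.1 * Real.log (q0 p.1 * c)) * Tp p with hG1
    set G2 : (Fin nx → ℝ) × (Fin (K + 1) → Fin nx → ℝ) → ℝ :=
      fun p => q0 p.1 * (Tp p * Real.log (Tp p * c ^ (K + 1))) with hG2
    have hsplit : ∀ p, Gfull p = G1 p + G2 p := by
      intro p
      rw [hGfull, hG1, hG2]
      exact kl_split (q0 p.1) (Tp p) c (K + 1) hc0
    have hGe : ∀ s : Fin (K + 2) → Fin nx → ℝ,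
        (q0 (s 0) * ∏ k : Fin (K + 1), q (s k.castSucc) (s k.succ))
          * Real.log ((q0 (s 0) * ∏ k : Fin (K + 1), q (s k.castSucc) (s k.succ))
            * c ^ (K + 2)) = Gfull (e s) := by
      intro s
      rw [hGfull, he, peel_apply, hTp, peel_prod q s]
    rw [show (∫ s in Set.univ.pi fun _ : Fin (K + 2) => 𝒳,
          (q0 (s 0) * ∏ k : Fin (K + 1), q (s k.castSucc) (s k.succ))
            * Real.log ((q0 (s 0) * ∏ k : Fin (K + 1), q (s k.castSucc) (s k.succ))
              * c ^ (K + 2)))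
        = ∫ s in Set.univ.pi fun _ : Fin (K + 2) => 𝒳, Gfull (e s) from
          setIntegral_congr_fun (MeasurableSet.univ_pi fun _ => hXm) fun s _ => hGe s]
    rw [peel_set 𝒳, ← he]
    rw [(volume_preserving_piFinSuccAbove (fun _ : Fin (K + 2) => (Fin nx → ℝ))
      0).setIntegral_preimage_emb (MeasurableEquiv.measurableEmbedding _) Gfull (𝒳 ×ˢ S)]
    have hTpcont : ContinuousOn Tp (𝒳 ×ˢ S) := traj_contOn hqcont
    have hG1cont : ContinuousOn G1 (𝒳 ×ˢ S) := by
      apply ContinuousOn.mul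
      · exact (contOn_mul_log hq0cont c hc0).comp continuous_fst.continuousOn
          fun p hp => hp.1
      · exact hTpcont
    have hG2cont : ContinuousOn G2 (𝒳 ×ˢ S) := by
      apply ContinuousOn.mul
      · exact hq0cont.comp continuous_fst.continuousOn fun p hp => hp.1
      · exact contOn_mul_log hTpcont (c ^ (K + 1)) (pow_ne_zero _ hc0)
    have hG1int : IntegrableOn G1 (𝒳 ×ˢ S) := hG1cont.integrableOn_compact (hcomp.prod hSc)
    have hG2int : IntegrableOn G2 (𝒳 ×ˢ S) := hG2cont.integrableOn_compact (hcomp.prod hSc)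
    rw [setIntegral_congr_fun (hXm.prod hSm) (fun p _ => hsplit p)]
    rw [Measure.volume_eq_prod] at hG1int hG2int ⊢
    rw [integral_add hG1int hG2int]
    rw [setIntegral_prod G1 hG1int, setIntegral_prod G2 hG2int]
    congr 1
    · -- first piece
      have key : ∀ x ∈ 𝒳, (∫ t in S, G1 (x, t)) = q0 x * Real.log (q0 x * c) := by
        intro x hx
        have hn : (∫ t in S, q x (t 0) * ∏ k : Fin K, q (t k.castSucc) (t k.succ)) = 1 :=
          traj_norm hcomp hqcont hqint K (fun x' => q x x')
            (hqcont.comp (continuous_const.prodMk continuous_id).continuousOn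
              (fun x' hx' => ⟨hx, hx'⟩)) (hqint x hx)
        have h1 : (∫ t in S, G1 (x, t)) = (q0 x * Real.log (q0 x * c)) * ∫ t in S,
            q x (t 0) * ∏ k : Fin K, q (t k.castSucc) (t k.succ) := by
          simp only [hG1, hTp]; exact integral_const_mul _ _
        rw [h1, hn, mul_one]
      exact setIntegral_congr_fun hXm fun x hx => key x hx
    · -- second piece
      have key : ∀ x ∈ 𝒳, (∫ t in S, G2 (x, t)) = q0 x * 𝒱 0 x := by
        intro x hx
        have hqxcont : ContinuousOn (fun x' => q x x') 𝒳 :=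
          hqcont.comp (continuous_const.prodMk continuous_id).continuousOn
            (fun x' hx' => ⟨hx, hx'⟩)
        have hIH : (∫ t in S,
            (q x (t 0) * ∏ k : Fin K, q (t k.castSucc) (t k.succ))
              * Real.log ((q x (t 0) * ∏ k : Fin K, q (t k.castSucc) (t k.succ))
                * c ^ (K + 1)))
            = (∫ x' in 𝒳, q x x' * Real.log (q x x' * c))
              + ∫ x' in 𝒳, q x x' * 𝒱 1 x' :=
          IH (fun x' => q x x') hqxcont (hqint x hx) (fun k => 𝒱 (k + 1))
            h𝒱K (fun k hk => h𝒱rec (k + 1) (Nat.succ_lt_succ hk))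
        have h1 : (∫ t in S, G2 (x, t)) = q0 x * ∫ t in S,
            (q x (t 0) * ∏ k : Fin K, q (t k.castSucc) (t k.succ))
              * Real.log ((q x (t 0) * ∏ k : Fin K, q (t k.castSucc) (t k.succ))
                * c ^ (K + 1)) := by
          simp only [hG2, hTp]; exact integral_const_mul _ _
        rw [h1, hIH, ← h𝒱rec 0 (Nat.succ_pos K) x hx]
      exact setIntegral_congr_fun hXm fun x hx => key x hx

end


/-- Continuous KL divergence to uniform recursivity, Lemma
`recursive_continuous_KL_to_uniform`: `KL(T‖U) = φ(q₀, 𝒱₀)` for the continuous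
backward value recursion `𝒱_k`. -/
theorem continuous_kl_recursion
    (nx K : ℕ)
    (𝒳 : Set (Fin nx → ℝ))
    (hcomp : IsCompact 𝒳) (hpos : 0 < volume 𝒳)
    (q0 : (Fin nx → ℝ) → ℝ) (q : (Fin nx → ℝ) → (Fin nx → ℝ) → ℝ)
    (hq0cont : ContinuousOn q0 𝒳)
    (hq0nonneg : ∀ x ∈ 𝒳, 0 ≤ q0 x)
    (hq0int : (∫ x in 𝒳, q0 x) = 1)
    (hqcont : ContinuousOn (fun z : (Fin nx → ℝ) × (Fin nx → ℝ) => q z.1 z.2) (𝒳 ×ˢ 𝒳))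
    (hqnonneg : ∀ x ∈ 𝒳, ∀ x' ∈ 𝒳, 0 ≤ q x x')
    (hqint : ∀ x ∈ 𝒳, (∫ x' in 𝒳, q x x') = 1)
    -- backward value functions
    (𝒱 : ℕ → (Fin nx → ℝ) → ℝ)
    (h𝒱K : ∀ x ∈ 𝒳, 𝒱 K x = 0)
    (h𝒱rec : ∀ k, k < K → ∀ x ∈ 𝒳, 𝒱 k x =
        (∫ x' in 𝒳, q x x' * Real.log (q x x' * (volume 𝒳).toReal))
        + ∫ x' in 𝒳, q x x' * 𝒱 (k + 1) x')
    -- trajectory density and trajectory space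
    (T : (Fin (K + 1) → Fin nx → ℝ) → ℝ)
    (hT : ∀ s, T s = q0 (s 0) * ∏ k : Fin K, q (s k.castSucc) (s k.succ))
    (𝒮 : Set (Fin (K + 1) → Fin nx → ℝ))
    (h𝒮 : 𝒮 = Set.univ.pi fun _ => 𝒳) :
    (∫ s in 𝒮, T s * Real.log (T s * (volume 𝒳).toReal ^ (K + 1)))
      = (∫ x in 𝒳, q0 x * Real.log (q0 x * (volume 𝒳).toReal))
        + ∫ x in 𝒳, q0 x * 𝒱 0 x := by
  subst h𝒮
  simp only [hT]
  exact traj_kl hcomp hpos hqcont hqint K q0 hq0cont hq0int 𝒱 h𝒱K h𝒱rec
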